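/- Let t be a target distribution with finite support of cardinality n, and let M be a positive integer with n ≤ M. Then there exists an M-type distribution p with ‖p − t‖₁ ≤ n/(2M); in particular, the minimum of the variational distance to t over all M-type distributions is at most n/(2M). -/

import Mathlib

/-- Variational distance `‖p − t‖₁ = Σ_i |p_i − t_i|`. -/
noncomputable def vd (p t : ℕ → ℝ) : ℝ := ∑' i, |p i - t i|

/-- A target distribution: a probability distribution on the positive integers
(indexed here by ℕ) with nonincreasing entries. -/
def IsTargetDist (t : ℕ → ℝ) : Prop :=
  (∀ i, 0 ≤ t i) ∧ (∀ i, t (i + 1) ≤ t i) ∧ HasSum t 1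

/-- An `M`-type distribution: every entry is `c_i / M` for a nonnegative integer
`c_i ≤ M`, and the entries sum to one. -/
def IsMType (M : ℕ) (p : ℕ → ℝ) : Prop :=
  HasSum p 1 ∧ ∃ c : ℕ → ℕ, (∀ i, c i ≤ M) ∧ ∀ i, p i = (c i : ℝ) / M

/-- if the target distribution `t` has finite support of size `n ≤ M`,
then some `M`-type distribution `p` satisfies `‖p − t‖₁ ≤ n/(2M)`. -/
theorem stmt6 (t : ℕ → ℝ) (ht : IsTargetDist t) (n : ℕ)
    (hpos : ∀ i, i < n → 0 < t i) (hzero : ∀ i, n ≤ i → t i = 0)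
    (M : ℕ) (hM : 0 < M) (hnM : n ≤ M) :
    ∃ p : ℕ → ℝ, IsMType M p ∧ vd p t ≤ (n : ℝ) / (2 * M) := by
  obtain ⟨ht0, -, htsum⟩ := ht
  have hMR : (0:ℝ) < M := by exact_mod_cast hM
  have hn0 : 0 < n := by
    rcases Nat.eq_zero_or_pos n with h | h
    · exfalso
      have hz : ∀ i, t i = 0 := fun i => hzero i (h ▸ Nat.zero_le i)
      have h0 : HasSum t 0 := by
        have : t = fun _ => (0:ℝ) := funext hz
        rw [this]; exact hasSum_zero
      have := h0.unique htsum
      norm_num at this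
    · exact h
  have hnR : (0:ℝ) < n := by exact_mod_cast hn0
  have hts : ∑ i ∈ Finset.range n, t i = 1 := by
    rw [← htsum.tsum_eq]
    exact (tsum_eq_sum (fun i hi => hzero i (by simpa using hi))).symm
  set g : ℕ → ℝ := fun i => (M:ℝ) * t i with hg
  set f : ℕ → ℝ := fun i => Int.fract (g i) with hf
  set k : ℕ → ℤ := fun i => ⌊g i⌋ with hk
  have hgsum : ∑ i ∈ Finset.range n, g i = M := by
    simp only [hg, ← Finset.mul_sum, hts, mul_one]
  have hf0 : ∀ i, 0 ≤ f i := fun i => Int.fract_nonneg _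
  have hf1 : ∀ i, f i < 1 := fun i => Int.fract_lt_one _
  have hk0 : ∀ i, 0 ≤ k i := fun i =>
    Int.floor_nonneg.mpr (mul_nonneg hMR.le (ht0 i))
  have hfk : ∀ i, f i = g i - (k i : ℝ) := fun i => rfl
  set K : ℤ := ∑ i ∈ Finset.range n, k i with hK
  have hDK : ∑ i ∈ Finset.range n, f i = (M:ℝ) - (K:ℝ) := by
    simp only [hfk, Finset.sum_sub_distrib, hgsum, hK]
    push_cast
    ring
  have hKM : K ≤ M := by
    have h1 : (0:ℝ) ≤ ∑ i ∈ Finset.range n, f i :=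
      Finset.sum_nonneg fun i _ => hf0 i
    have : (K:ℝ) ≤ (M:ℝ) := by linarith [hDK]
    exact_mod_cast this
  set d : ℕ := ((M:ℤ) - K).toNat with hd
  have hdZ : (d:ℤ) = (M:ℤ) - K := Int.toNat_of_nonneg (by omega)
  have hdR : (d:ℝ) = ∑ i ∈ Finset.range n, f i := by
    rw [hDK]
    have : ((d:ℤ):ℝ) = ((M:ℤ):ℝ) - (K:ℝ) := by exact_mod_cast hdZ
    push_cast at this ⊢
    linarith
  have hdn : d ≤ n := by
    have h2 : ∑ i ∈ Finset.range n, f i < ∑ i ∈ Finset.range n, (1:ℝ) :=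
      Finset.sum_lt_sum_of_nonempty ⟨0, Finset.mem_range.mpr hn0⟩ fun i _ => hf1 i
    have : (d:ℝ) < n := by simpa [hdR] using h2
    exact_mod_cast this.le
  -- choose the subset T of size d maximizing ∑ f
  obtain ⟨T0, hT0sub, hT0card⟩ :=
    Finset.exists_subset_card_eq (s := Finset.range n) (n := d) (by simpa using hdn)
  obtain ⟨T, hTmem, hTmax⟩ := Finset.exists_max_image
    ((Finset.range n).powersetCard d) (fun T => ∑ i ∈ T, f i)
    ⟨T0, Finset.mem_powersetCard.mpr ⟨hT0sub, hT0card⟩⟩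
  obtain ⟨hTsub, hTcard⟩ := Finset.mem_powersetCard.mp hTmem
  set S : ℝ := ∑ i ∈ T, f i with hS
  -- exchange property
  have hex : ∀ i ∈ T, ∀ j ∈ Finset.range n, j ∉ T → f j ≤ f i := by
    intro i hi j hj hjT
    have hd1 : 1 ≤ d := by
      rw [← hTcard]; exact Finset.card_pos.mpr ⟨i, hi⟩
    have hmem' : insert j (T.erase i) ∈ (Finset.range n).powersetCard d := by
      refine Finset.mem_powersetCard.mpr ⟨?_, ?_⟩
      · intro x hx
        rcases Finset.mem_insert.mp hx with rfl | hx
        · exact hj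
        · exact hTsub (Finset.mem_of_mem_erase hx)
      · rw [Finset.card_insert_of_notMem (by simp [Finset.mem_erase, hjT]),
          Finset.card_erase_of_mem hi, hTcard]
        omega
    have hle := hTmax _ hmem'
    rw [Finset.sum_insert (by simp [Finset.mem_erase, hjT]),
      Finset.sum_erase_eq_sub hi] at hle
    linarith
  have hsdiff : ∑ j ∈ Finset.range n \ T, f j = (d:ℝ) - S := by
    have h := Finset.sum_sdiff (f := f) hTsub
    rw [← hdR] at h
    linarith
  -- key inequality : d * (d - S) ≤ (n - d) * S
  have key : (d:ℝ) * ((d:ℝ) - S) ≤ ((n:ℝ) - (d:ℝ)) * S := by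
    have hcard : (Finset.range n \ T).card = n - d := by
      rw [Finset.card_sdiff_of_subset hTsub, Finset.card_range, hTcard]
    have h1 : ∑ i ∈ T, ∑ j ∈ Finset.range n \ T, f j
        ≤ ∑ i ∈ T, ∑ _j ∈ Finset.range n \ T, f i := by
      refine Finset.sum_le_sum fun i hi => Finset.sum_le_sum fun j hj => ?_
      exact hex i hi j (Finset.mem_sdiff.mp hj).1 (Finset.mem_sdiff.mp hj).2
    have h2 : ∑ i ∈ T, ∑ j ∈ Finset.range n \ T, f j = (d:ℝ) * ((d:ℝ) - S) := by
      rw [Finset.sum_const, hsdiff, hTcard, nsmul_eq_mul]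
    have h3 : ∑ i ∈ T, ∑ _j ∈ Finset.range n \ T, f i = ((n:ℝ) - (d:ℝ)) * S := by
      simp only [Finset.sum_const, hcard, nsmul_eq_mul]
      rw [← Finset.mul_sum, ← hS]
      have hcast : ((n - d : ℕ):ℝ) = (n:ℝ) - (d:ℝ) := by
        push_cast [hdn]; ring
      rw [hcast]
    linarith [h1, h2.symm, h3]
  have herr : 2 * ((d:ℝ) - S) ≤ (n:ℝ) / 2 := by
    nlinarith [sq_nonneg ((n:ℝ) - 2 * d), hnR, key]
  -- construct c and p
  set c : ℕ → ℕ := fun i => if i ∈ T then (k i).toNat + 1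
    else if i < n then (k i).toNat else 0 with hc
  have hcT : ∀ i ∈ T, (c i : ℝ) = (k i : ℝ) + 1 := by
    intro i hi
    simp only [hc, if_pos hi]
    have hcast : (((k i).toNat : ℕ) : ℝ) = ((k i : ℤ) : ℝ) := by
      exact_mod_cast Int.toNat_of_nonneg (hk0 i)
    push_cast
    rw [hcast]
  have hcnT : ∀ i ∈ Finset.range n \ T, (c i : ℝ) = (k i : ℝ) := by
    intro i hi
    obtain ⟨hi1, hi2⟩ := Finset.mem_sdiff.mp hi
    simp only [hc, if_neg hi2, if_pos (Finset.mem_range.mp hi1)]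
    exact_mod_cast Int.toNat_of_nonneg (hk0 i)
  have hcz : ∀ i, n ≤ i → c i = 0 := by
    intro i hi
    have hiT : i ∉ T := fun h => by
      have := Finset.mem_range.mp (hTsub h); omega
    simp [hc, hiT, Nat.not_lt.mpr hi]
  have hcsum : ∑ i ∈ Finset.range n, (c i : ℝ) = M := by
    rw [← Finset.sum_sdiff hTsub]
    rw [Finset.sum_congr rfl hcnT, Finset.sum_congr rfl hcT]
    have e1 : ∑ i ∈ Finset.range n \ T, (k i : ℝ)
        = ∑ i ∈ Finset.range n, (k i : ℝ) - ∑ i ∈ T, (k i : ℝ) := by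
      have := Finset.sum_sdiff (f := fun i => (k i : ℝ)) hTsub
      linarith
    have e2 : ∑ i ∈ T, ((k i : ℝ) + 1) = ∑ i ∈ T, (k i : ℝ) + d := by
      rw [Finset.sum_add_distrib, Finset.sum_const, hTcard, nsmul_eq_mul, mul_one]
    have e3 : ∑ i ∈ Finset.range n, (k i : ℝ) = (K:ℝ) := by
      rw [hK]; push_cast; rfl
    have e4 : (K:ℝ) + (d:ℝ) = M := by
      have : ((d:ℤ):ℝ) = ((M:ℤ):ℝ) - (K:ℝ) := by exact_mod_cast hdZ
      push_cast at this
      linarith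
    rw [e1, e2, e3]
    linarith
  have hcM : ∀ i, c i ≤ M := by
    intro i
    rcases Nat.lt_or_ge i n with hi | hi
    · have h1 : (c i : ℝ) ≤ ∑ j ∈ Finset.range n, (c j : ℝ) :=
        Finset.single_le_sum (f := fun j => (c j : ℝ))
          (fun j _ => by positivity) (Finset.mem_range.mpr hi)
      rw [hcsum] at h1
      exact_mod_cast h1
    · rw [hcz i hi]; exact Nat.zero_le _
  refine ⟨fun i => (c i : ℝ) / M, ⟨?_, c, hcM, fun i => rfl⟩, ?_⟩
  · -- HasSum
    have h0 : ∀ i ∉ Finset.range n, (c i : ℝ) / M = 0 := by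
      intro i hi
      rw [hcz i (by simpa using hi)]
      simp
    have := hasSum_sum_of_ne_finset_zero (L := SummationFilter.unconditional ℕ) h0
    have hs1 : ∑ i ∈ Finset.range n, (c i : ℝ) / M = 1 := by
      rw [← Finset.sum_div, hcsum, div_self hMR.ne']
    rwa [hs1] at this
  · -- variational distance bound
    have hvd : vd (fun i => (c i : ℝ) / M) t
        = ∑ i ∈ Finset.range n, |(c i : ℝ) / M - t i| := by
      refine tsum_eq_sum fun i hi => ?_
      have hi' : n ≤ i := by simpa using hi
      simp [hcz i hi', hzero i hi']
    have habs : ∀ i ∈ Finset.range n, |(c i : ℝ) / M - t i| = |(c i : ℝ) - g i| / M := by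
      intro i _
      rw [hg]
      rw [show (c i : ℝ) / M - t i = ((c i : ℝ) - M * t i) / M by field_simp]
      rw [abs_div, abs_of_pos hMR]
    have hsplit : ∑ i ∈ Finset.range n, |(c i : ℝ) - g i| = 2 * ((d:ℝ) - S) := by
      rw [← Finset.sum_sdiff hTsub]
      have e1 : ∀ i ∈ Finset.range n \ T, |(c i : ℝ) - g i| = f i := by
        intro i hi
        rw [hcnT i hi]
        rw [abs_sub_comm, abs_of_nonneg (by linarith [hfk i, hf0 i])]
        linarith [hfk i]
      have e2 : ∀ i ∈ T, |(c i : ℝ) - g i| = 1 - f i := by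
        intro i hi
        rw [hcT i hi]
        rw [abs_of_nonneg (by linarith [hfk i, (hf1 i).le])]
        linarith [hfk i]
      rw [Finset.sum_congr rfl e1, Finset.sum_congr rfl e2, hsdiff]
      rw [Finset.sum_sub_distrib, Finset.sum_const, hTcard, nsmul_eq_mul, mul_one, ← hS]
      ring
    rw [hvd, Finset.sum_congr rfl habs, ← Finset.sum_div, hsplit]
    rw [div_le_div_iff₀ hMR (by positivity)]
    calc 2 * ((d:ℝ) - S) * (2 * M) ≤ ((n:ℝ)/2) * (2 * M) := by
          apply mul_le_mul_of_nonneg_right herr (by positivity)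
      _ = (n:ℝ) * M := by ring
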